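/- In Hₙ (n ≥ 6), the number of positive roots Y = Σ aᵢEᵢ with a₀ ≠ 0, a₁ ≠ 0 and a_{n-1} ≠ 0 is (n-2)(n-3)/2; counting both signs, the number of such roots is (n-2)(n-3). -/

import Mathlib

open Finset

def HAdj (i j : ℕ) : Bool :=
  decide ((i = 0 ∧ j = 3) ∨ (j = 0 ∧ i = 3) ∨ (1 ≤ i ∧ i + 1 = j) ∨ (1 ≤ j ∧ j + 1 = i))

def HM (i j : ℕ) : ℤ :=
  if i = j then (if i = 0 then -3 else -2) else if HAdj i j then 1 else 0

def HQ (n : ℕ) (Y : ℕ → ℤ) : ℤ :=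
  ∑ i ∈ Finset.range n, ∑ j ∈ Finset.range n, Y i * HM i j * Y j

/-- The triple root system of `Hₙ`. -/
def HRoots (n : ℕ) : Set (ℕ → ℤ) :=
  {Y : ℕ → ℤ | (∀ i, n ≤ i → Y i = 0) ∧ Y ≠ 0 ∧
    ((∀ i, 0 ≤ Y i) ∨ (∀ i, Y i ≤ 0)) ∧ (HQ n Y = -2 ∨ HQ n Y = -3)}

lemma int_self_le_sq (d : ℤ) : d ≤ d^2 := by nlinarith [sq_nonneg d, sq_nonneg (d-1)]
lemma int_neg_le_sq (d : ℤ) : -d ≤ d^2 := by nlinarith [sq_nonneg d, sq_nonneg (d+1)]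

lemma tele_sum (Y : ℕ → ℤ) {a b : ℕ} (h : a ≤ b) :
    ∑ i ∈ Finset.Ico a b, (Y i - Y (i+1)) = Y a - Y b := by
  induction b, h using Nat.le_induction with
  | base => simp
  | succ b hb ih => rw [Finset.sum_Ico_succ_top (by omega), ih]; ring

lemma tele_lb (Y : ℕ → ℤ) {a b : ℕ} (h : a ≤ b) :
    Y a - Y b ≤ ∑ i ∈ Finset.Ico a b, (Y i - Y (i+1))^2 := by
  rw [← tele_sum Y h]; exact Finset.sum_le_sum fun i _ => int_self_le_sq _

lemma tele_lb' (Y : ℕ → ℤ) {a b : ℕ} (h : a ≤ b) :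
    Y b - Y a ≤ ∑ i ∈ Finset.Ico a b, (Y i - Y (i+1))^2 := by
  have := Finset.sum_le_sum (fun i (_ : i ∈ Finset.Ico a b) => int_neg_le_sq (Y i - Y (i+1)))
  rw [Finset.sum_neg_distrib, tele_sum Y h] at this
  linarith

lemma HM_last {n i : ℕ} (hn : 6 ≤ n) (hi : i < n) :
    HM i n = (if i = n - 1 then 1 else 0) ∧ HM n i = (if i = n - 1 then 1 else 0) := by
  have hb : ∀ a b : ℕ, (HAdj a b = true) ↔
      ((a = 0 ∧ b = 3) ∨ (b = 0 ∧ a = 3) ∨ (1 ≤ a ∧ a + 1 = b) ∨ (1 ≤ b ∧ b + 1 = a)) := by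
    intro a b; exact decide_eq_true_iff
  unfold HM
  constructor <;>
  · rw [if_neg (by omega)]
    by_cases h : i = n - 1
    · rw [if_pos ((hb _ _).mpr (by omega)), if_pos h]
    · rw [if_neg h, if_neg (by rw [hb]; omega)]

lemma HQ_succ {n : ℕ} (hn : 6 ≤ n) (Y : ℕ → ℤ) :
    HQ (n+1) Y = HQ n Y + 2 * Y (n-1) * Y n - 2 * (Y n)^2 := by
  unfold HQ
  rw [Finset.sum_range_succ]
  have h1 : ∀ i ∈ Finset.range n,
      ∑ j ∈ Finset.range (n+1), Y i * HM i j * Y j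
      = (∑ j ∈ Finset.range n, Y i * HM i j * Y j) + (if i = n - 1 then Y i * Y n else 0) := by
    intro i hi
    rw [Finset.sum_range_succ, (HM_last hn (Finset.mem_range.mp hi)).1]
    split_ifs <;> ring
  rw [Finset.sum_congr rfl h1, Finset.sum_add_distrib, Finset.sum_ite_eq' (Finset.range n)]
  have h2 : ∑ j ∈ Finset.range (n+1), Y n * HM n j * Y j
      = Y (n-1) * Y n - 2 * (Y n)^2 := by
    rw [Finset.sum_range_succ]
    have : ∀ j ∈ Finset.range n, Y n * HM n j * Y j = (if j = n - 1 then Y n * Y j else 0) := by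
      intro j hj
      rw [(HM_last hn (Finset.mem_range.mp hj)).2]
      split_ifs <;> ring
    rw [Finset.sum_congr rfl this, Finset.sum_ite_eq' (Finset.range n)]
    have hnn : HM n n = -2 := by unfold HM; split_ifs <;> first | rfl | omega
    rw [hnn]
    simp only [Finset.mem_range]
    rw [if_pos (by omega)]
    ring
  rw [h2]
  simp only [Finset.mem_range]
  rw [if_pos (by omega)]
  ring

lemma HQ_eq {n : ℕ} (hn : 6 ≤ n) (Y : ℕ → ℤ) :
    HQ n Y = -(3*(Y 0)^2 - 2*(Y 0)*(Y 3) + (Y 1)^2 + (Y (n-1))^2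
      + ∑ i ∈ Finset.Ico 1 (n-1), (Y i - Y (i+1))^2) := by
  induction n, hn using Nat.le_induction with
  | base =>
    simp only [HQ, Finset.sum_range_succ, Finset.sum_range_zero, HM, HAdj,
      Finset.sum_Ico_eq_sum_range]
    norm_num [Finset.sum_range_succ]
    ring
  | succ n hn ih =>
    rw [HQ_succ hn, ih]
    have h1 : n + 1 - 1 = n := rfl
    have h3 : n - 1 + 1 = n := by omega
    have h2 : ∑ i ∈ Finset.Ico 1 (n+1-1), (Y i - Y (i+1))^2
        = (∑ i ∈ Finset.Ico 1 (n-1), (Y i - Y (i+1))^2) + (Y (n-1) - Y n)^2 := by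
      rw [h1, ← h3, Finset.sum_Ico_succ_top (by omega), h3]
    rw [h2, h1]
    ring

def HR (n b c : ℕ) : ℕ → ℤ := fun i =>
  if i = 0 then 1 else if n - 1 < i then 0
  else 1 + (if 2 ≤ i ∧ i ≤ b then 1 else 0) + (if 3 ≤ i ∧ i ≤ c then 1 else 0)

lemma HR_eval {n b c i : ℕ} (h1 : 1 ≤ i) (h2 : i ≤ n - 1) :
    HR n b c i = 1 + (if 2 ≤ i ∧ i ≤ b then 1 else 0) + (if 3 ≤ i ∧ i ≤ c then 1 else 0) := by
  unfold HR
  rw [if_neg (show ¬ i = 0 by omega), if_neg (show ¬ n - 1 < i by omega)]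

lemma HR_zero (n b c : ℕ) : HR n b c 0 = 1 := rfl

lemma HR_supp {n b c : ℕ} (hn : 6 ≤ n) {i : ℕ} (h : n ≤ i) : HR n b c i = 0 := by
  unfold HR
  rw [if_neg (by omega), if_pos (by omega)]

lemma HR_one {n b c : ℕ} (hn : 6 ≤ n) : HR n b c 1 = 1 := by
  rw [HR_eval le_rfl (by omega), if_neg (by omega), if_neg (by omega)]; ring

lemma HR_last {n b c : ℕ} (hn : 6 ≤ n) (hb : b ≤ n - 2) (hc : c ≤ n - 2) :
    HR n b c (n-1) = 1 := by
  rw [HR_eval (by omega) le_rfl, if_neg (by omega), if_neg (by omega)]; ring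

lemma HR_nonneg {n b c : ℕ} (i : ℕ) : 0 ≤ HR n b c i := by
  unfold HR; split_ifs <;> norm_num

section
variable {n b c : ℕ} (hn : 6 ≤ n) (hc1 : 2 ≤ c) (hc2 : c ≤ n - 2)
    (hb : b = 1 ∨ (3 ≤ b ∧ b ≤ n - 2 ∧ c < b))

include hn hc1 hc2 hb in
lemma HR_sum : ∑ i ∈ Finset.Ico 1 (n-1), (HR n b c i - HR n b c (i+1))^2
    = 2 * (if 3 ≤ b then 1 else 0) + 2 * (if 3 ≤ c then 1 else 0) := by
  rw [← Finset.sum_Ico_consecutive _ (by omega : 1 ≤ 3) (by omega : 3 ≤ n - 1)]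
  have h12 : ∑ i ∈ Finset.Ico 1 3, (HR n b c i - HR n b c (i+1))^2
      = (if 3 ≤ b then 1 else 0) + (if 3 ≤ c then 1 else 0) := by
    have e1 : Finset.Ico 1 3 = {1, 2} := rfl
    rw [e1, Finset.sum_insert (by decide), Finset.sum_singleton,
      HR_eval (n := n) (b := b) (c := c) le_rfl (by omega),
      HR_eval (n := n) (b := b) (c := c) (by omega) (by omega : 2 ≤ n - 1),
      HR_eval (n := n) (b := b) (c := c) (by omega) (by omega : 3 ≤ n - 1)]
    norm_num
    split_ifs <;> norm_num <;> omega
  have h3 : ∀ i ∈ Finset.Ico 3 (n-1), (HR n b c i - HR n b c (i+1))^2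
      = (if i = b then 1 else 0) + (if i = c then 1 else 0) := by
    intro i hi
    simp only [Finset.mem_Ico] at hi
    rw [HR_eval (by omega) (by omega), HR_eval (by omega) (by omega)]
    split_ifs <;> norm_num <;> omega
  rw [Finset.sum_congr rfl h3, Finset.sum_add_distrib,
    Finset.sum_ite_eq' (Finset.Ico 3 (n-1)) b (fun _ => (1:ℤ)),
    Finset.sum_ite_eq' (Finset.Ico 3 (n-1)) c (fun _ => (1:ℤ)), h12]
  simp only [Finset.mem_Ico]
  have hb' : (3 ≤ b ∧ b < n - 1) ↔ 3 ≤ b := by constructor <;> intro h <;> [exact h.1; exact ⟨h, by omega⟩]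
  have hc' : (3 ≤ c ∧ c < n - 1) ↔ 3 ≤ c := by constructor <;> intro h <;> [exact h.1; exact ⟨h, by omega⟩]
  rw [if_congr hb' rfl rfl, if_congr hc' rfl rfl]
  ring
end

lemma HQ_HR {n b c : ℕ} (hn : 6 ≤ n) (hc1 : 2 ≤ c) (hc2 : c ≤ n - 2)
    (hb : b = 1 ∨ (3 ≤ b ∧ b ≤ n - 2 ∧ c < b)) : HQ n (HR n b c) = -3 := by
  have hb2 : b ≤ n - 2 := by rcases hb with h|h; omega; exact h.2.1
  have h3 : HR n b c 3 = 1 + (if 3 ≤ b then 1 else 0) + (if 3 ≤ c then 1 else 0) := by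
    rw [HR_eval (by omega) (by omega : 3 ≤ n - 1)]
    have e1 : (2 ≤ 3 ∧ 3 ≤ b) ↔ 3 ≤ b := by omega
    have e2 : (3 ≤ 3 ∧ 3 ≤ c) ↔ 3 ≤ c := by omega
    rw [if_congr e1 rfl rfl, if_congr e2 rfl rfl]
  rw [HQ_eq hn, HR_sum hn hc1 hc2 hb, HR_zero, HR_one hn, HR_last hn hb2 hc2, h3]
  ring

lemma HQ_neg (n : ℕ) (Y : ℕ → ℤ) : HQ n (-Y) = HQ n Y := by
  unfold HQ
  refine Finset.sum_congr rfl fun i _ => Finset.sum_congr rfl fun j _ => ?_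
  simp only [Pi.neg_apply]
  ring

def Par (n : ℕ) : Finset (ℕ × ℕ) :=
  ((Finset.Ico 2 (n-1)).image fun c => (1, c)) ∪
  ((Finset.Ico 3 (n-1)).biUnion fun b => (Finset.Ico 2 b).image fun c => (b, c))

lemma mem_Par {n : ℕ} (hn : 6 ≤ n) {p : ℕ × ℕ} :
    p ∈ Par n ↔ 2 ≤ p.2 ∧ p.2 ≤ n-2 ∧ (p.1 = 1 ∨ (3 ≤ p.1 ∧ p.1 ≤ n-2 ∧ p.2 < p.1)) := by
  obtain ⟨b, c⟩ := p
  simp only [Par, Finset.mem_union, Finset.mem_image, Finset.mem_biUnion, Finset.mem_Ico,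
    Prod.mk.injEq]
  constructor
  · rintro (⟨c', ⟨h1, h2⟩, rfl, rfl⟩ | ⟨b', ⟨h1, h2⟩, c', ⟨h3, h4⟩, rfl, rfl⟩) <;>
      refine ⟨by omega, by omega, ?_⟩
    · exact Or.inl rfl
    · exact Or.inr ⟨by omega, by omega, by omega⟩
  · rintro ⟨h1, h2, rfl | ⟨h3, h4, h5⟩⟩
    · exact Or.inl ⟨c, ⟨by omega, by omega⟩, rfl, rfl⟩
    · exact Or.inr ⟨b, ⟨by omega, by omega⟩, c, ⟨by omega, by omega⟩, rfl, rfl⟩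

lemma card_Par {n : ℕ} (hn : 6 ≤ n) : 2 * (Par n).card = (n-2) * (n-3) := by
  obtain ⟨k, rfl⟩ : ∃ k, n = k + 6 := ⟨n - 6, by omega⟩
  have hdisj : Disjoint ((Finset.Ico 2 (k+6-1)).image fun c => (1, c))
      ((Finset.Ico 3 (k+6-1)).biUnion fun b => (Finset.Ico 2 b).image fun c => (b, c)) := by
    simp only [Finset.disjoint_left, Finset.mem_image, Finset.mem_biUnion, Finset.mem_Ico]
    rintro ⟨x, y⟩ ⟨c', hc', e1, e2⟩ ⟨b', hb', c'', hc'', e3, e4⟩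
    omega
  have hpd : ∀ x ∈ Finset.Ico 3 (k+6-1), ∀ y ∈ Finset.Ico 3 (k+6-1), x ≠ y →
      Disjoint ((Finset.Ico 2 x).image fun c => (x, c)) ((Finset.Ico 2 y).image fun c => (y, c)) := by
    intro x _ y _ hxy
    simp only [Finset.disjoint_left, Finset.mem_image]
    rintro ⟨a, b⟩ ⟨c', hc', e1, e2⟩ ⟨c'', hc'', e3, e4⟩
    exact hxy (by omega)
  rw [Par, Finset.card_union_of_disjoint hdisj,
    Finset.card_image_of_injective _ (fun a b h => (Prod.mk.injEq _ _ _ _ ▸ h).2),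
    Finset.card_biUnion hpd]
  have himg : ∀ b ∈ Finset.Ico 3 (k+6-1),
      ((Finset.Ico 2 b).image fun c => (b, c)).card = b - 2 := by
    intro b _
    rw [Finset.card_image_of_injective _ (fun a b h => (Prod.mk.injEq _ _ _ _ ▸ h).2),
      Nat.card_Ico]
  rw [Finset.sum_congr rfl himg, Nat.card_Ico]
  have : ∑ b ∈ Finset.Ico 3 (k+6-1), (b - 2) = ∑ i ∈ Finset.range (k+2), (i + 1) := by
    rw [Finset.sum_Ico_eq_sum_range]
    refine Finset.sum_congr (congrArg _ (by omega)) fun i _ => by omega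
  rw [this, Finset.sum_add_distrib, Finset.sum_const, smul_eq_mul, mul_one, Finset.card_range]
  have hg : (∑ i ∈ Finset.range (k+2), i) * 2 = (k+2) * (k+1) :=
    Finset.sum_range_id_mul_two (k+2)
  have e1 : k + 6 - 1 - 2 = k + 3 := by omega
  have e2 : k + 6 - 2 = k + 4 := by omega
  have e3 : k + 6 - 3 = k + 3 := by omega
  rw [e1, e2, e3]
  set S := ∑ i ∈ Finset.range (k+2), i
  calc 2 * (k + 3 + (S + (k + 2))) = S * 2 + (4*k + 10) := by ring
    _ = (k+2)*(k+1) + (4*k+10) := by rw [hg]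
    _ = (k+4) * (k+3) := by ring

lemma HR_inj {n : ℕ} (hn : 6 ≤ n) {b c b' c' : ℕ}
    (h1 : 2 ≤ c) (h2 : c ≤ n-2) (h3 : b = 1 ∨ (3 ≤ b ∧ b ≤ n-2 ∧ c < b))
    (h1' : 2 ≤ c') (h2' : c' ≤ n-2) (h3' : b' = 1 ∨ (3 ≤ b' ∧ b' ≤ n-2 ∧ c' < b'))
    (heq : HR n b c = HR n b' c') : b = b' ∧ c = c' := by
  have hev : ∀ i, 1 ≤ i → i ≤ n-1 →
      (1 + (if 2 ≤ i ∧ i ≤ b then (1:ℤ) else 0) + (if 3 ≤ i ∧ i ≤ c then 1 else 0))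
      = (1 + (if 2 ≤ i ∧ i ≤ b' then 1 else 0) + (if 3 ≤ i ∧ i ≤ c' then 1 else 0)) := by
    intro i hi1 hi2
    rw [← HR_eval hi1 hi2, ← HR_eval hi1 hi2, heq]
  have hbase := hev 2 (by omega) (by omega)
  have hbb : b = b' := by
    rcases h3 with rfl | ⟨hb3, hb2, hcb⟩ <;> rcases h3' with rfl | ⟨hb3', hb2', hcb'⟩
    · rfl
    · exfalso; split_ifs at hbase <;> omega
    · exfalso; split_ifs at hbase <;> omega
    · by_contra hne
      rcases Nat.lt_or_ge b b' with hlt | hge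
      · have := hev b' (by omega) (by omega)
        split_ifs at this <;> omega
      · have := hev b (by omega) (by omega)
        split_ifs at this <;> omega
  subst hbb
  have hcc : c = c' := by
    by_contra hne
    rcases Nat.lt_or_ge c c' with hlt | hge
    · have := hev c' (by omega) (by omega)
      rcases h3 with rfl | ⟨hb3, hb2, hcb⟩ <;> rcases h3' with he | ⟨hb3', hb2', hcb'⟩ <;>
        split_ifs at this <;> omega
    · have hlt : c' < c := by omega
      have := hev c (by omega) (by omega)
      rcases h3 with rfl | ⟨hb3, hb2, hcb⟩ <;> rcases h3' with he | ⟨hb3', hb2', hcb'⟩ <;>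
        split_ifs at this <;> omega
  exact ⟨rfl, hcc⟩

lemma build {n : ℕ} (hn : 6 ≤ n) {Y : ℕ → ℤ} {b c : ℕ}
    (hsupp : ∀ i, n ≤ i → Y i = 0)
    (h0 : Y 0 = 1) (h1 : Y 1 = 1)
    (h2 : Y 2 = 1 + (if 2 ≤ b then 1 else 0))
    (hmid : ∀ i, 3 ≤ i → i ≤ n-1 →
      Y i = 1 + (if i ≤ b then 1 else 0) + (if i ≤ c then 1 else 0)) :
    Y = HR n b c := by
  funext i
  rcases Nat.eq_zero_or_pos i with rfl | hi
  · rw [h0]; rfl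
  rcases le_or_gt n i with hni | hni
  · rw [hsupp i hni, HR_supp hn hni]
  have hle : i ≤ n - 1 := by omega
  rw [HR_eval hi hle]
  rcases eq_or_lt_of_le (Nat.succ_le_of_lt hi) with rfl | hi1
  · rw [h1, if_neg (by omega), if_neg (by omega)]; ring
  rcases (show i = 2 ∨ 3 ≤ i by omega) with rfl | hi3
  · rw [h2, if_neg (show ¬(3 ≤ 2 ∧ 2 ≤ c) by omega)]
    rcases le_or_gt 2 b with hb | hb
    · rw [if_pos hb, if_pos (show 2 ≤ 2 ∧ 2 ≤ b from ⟨le_rfl, hb⟩)]; ring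
    · rw [if_neg (show ¬(2 ≤ b) by omega), if_neg (show ¬(2 ≤ 2 ∧ 2 ≤ b) by omega)]; ring
  · rw [hmid i hi3 hle]
    have e1 : (2 ≤ i ∧ i ≤ b) ↔ i ≤ b := by omega
    have e2 : (3 ≤ i ∧ i ≤ c) ↔ i ≤ c := by omega
    rw [if_congr e1 rfl rfl, if_congr e2 rfl rfl]

lemma classify {n : ℕ} (hn : 6 ≤ n) {Y : ℕ → ℤ}
    (hsupp : ∀ i, n ≤ i → Y i = 0) (hpos : ∀ i, 0 ≤ Y i)
    (h0 : Y 0 ≠ 0) (h1 : Y 1 ≠ 0) (hlast : Y (n-1) ≠ 0)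
    (hq : HQ n Y = -2 ∨ HQ n Y = -3) :
    ∃ b c, 2 ≤ c ∧ c ≤ n - 2 ∧ (b = 1 ∨ (3 ≤ b ∧ b ≤ n - 2 ∧ c < b)) ∧ Y = HR n b c := by
  have hY0 : 1 ≤ Y 0 := lt_of_le_of_ne (hpos 0) (Ne.symm h0)
  have hY1 : 1 ≤ Y 1 := lt_of_le_of_ne (hpos 1) (Ne.symm h1)
  have hYl : 1 ≤ Y (n-1) := lt_of_le_of_ne (hpos (n-1)) (Ne.symm hlast)
  have hy0 : 0 ≤ Y 3 := hpos 3
  have hsplit : ∑ i ∈ Finset.Ico 1 (n-1), (Y i - Y (i+1))^2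
      = ((Y 1 - Y 2)^2 + (Y 2 - Y 3)^2) + ∑ i ∈ Finset.Ico 3 (n-1), (Y i - Y (i+1))^2 := by
    rw [← Finset.sum_Ico_consecutive _ (by omega : 1 ≤ 3) (by omega : 3 ≤ n-1)]
    congr 1
    rw [show Finset.Ico 1 3 = {1,2} from rfl, Finset.sum_insert (by decide), Finset.sum_singleton]
  set SR := ∑ i ∈ Finset.Ico 3 (n-1), (Y i - Y (i+1))^2 with hSRdef
  have hq3 : 3*(Y 0)^2 - 2*(Y 0)*(Y 3) + (Y 1)^2 + (Y (n-1))^2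
        + ((Y 1 - Y 2)^2 + (Y 2 - Y 3)^2) + SR ≤ 3 := by
    rcases hq with h|h <;> (rw [HQ_eq hn Y, hsplit] at h; linarith)
  have hSR1 : Y 3 - Y (n-1) ≤ SR := tele_lb Y (by omega)
  have hSR0 : 0 ≤ SR := Finset.sum_nonneg (fun _ _ => sq_nonneg _)
  have hA : Y 0 = 1 := by
    by_contra hA
    have h2 : 2 ≤ Y 0 := by omega
    nlinarith [sq_nonneg (Y 1 - 2*Y 2 + Y 3), sq_nonneg (2*Y 1 - 2*Y 0 + 1),
      sq_nonneg (2*Y 1 - 2*Y 3 + 4*Y 0 - 2),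
      mul_nonneg (by linarith : (0:ℤ) ≤ Y (n-1) - 1) (by linarith : (0:ℤ) ≤ Y (n-1))]
  have hd : Y 3 - Y 1 ≤ (Y 1 - Y 2)^2 + (Y 2 - Y 3)^2 := by
    nlinarith [int_neg_le_sq (Y 1 - Y 2), int_neg_le_sq (Y 2 - Y 3)]
  have hu : Y 1 = 1 := by
    have : Y 1 ≤ 1 := by nlinarith [sq_nonneg (Y 1 - 1), int_self_le_sq (Y (n-1))]
    omega
  have hv : Y (n-1) = 1 := by
    have : Y (n-1) ≤ 1 := by nlinarith [sq_nonneg (Y (n-1) - 1), int_self_le_sq (Y 1)]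
    omega
  -- only HQ = -3 possible; tightness
  have hq4 : ((Y 1 - Y 2)^2 + (Y 2 - Y 3)^2) + SR = 2*(Y 3) - 2 := by
    have s0 : (Y 0)^2 = 1 := by rw [hA]; norm_num
    have s1 : (Y 1)^2 = 1 := by rw [hu]; norm_num
    have s2 : (Y (n-1))^2 = 1 := by rw [hv]; norm_num
    have s3 : Y 0 * Y 3 = Y 3 := by rw [hA]; ring
    rcases hq with h|h <;> rw [HQ_eq hn Y, hsplit] at h <;>
      [exfalso; skip] <;> linarith [hd, hSR1, s0, s1, s2, s3]
  have hDeq : (Y 1 - Y 2)^2 + (Y 2 - Y 3)^2 = Y 3 - 1 := by linarith [hd, hSR1]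
  have hSReq : SR = Y 3 - 1 := by linarith
  -- left steps
  have e1 : (Y 1 - Y 2)^2 = -(Y 1 - Y 2) := by
    linarith [int_neg_le_sq (Y 1 - Y 2), int_neg_le_sq (Y 2 - Y 3), hDeq]
  have e2 : (Y 2 - Y 3)^2 = -(Y 2 - Y 3) := by
    linarith [int_neg_le_sq (Y 1 - Y 2), int_neg_le_sq (Y 2 - Y 3), hDeq]
  have h12 : Y 2 = 1 ∨ Y 2 = 2 := by
    rcases mul_eq_zero.mp (show (Y 1 - Y 2) * (Y 1 - Y 2 + 1) = 0 by linear_combination e1)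
      with h | h <;> omega
  have h23 : Y 3 = Y 2 ∨ Y 3 = Y 2 + 1 := by
    rcases mul_eq_zero.mp (show (Y 2 - Y 3) * (Y 2 - Y 3 + 1) = 0 by linear_combination e2)
      with h | h <;> omega
  -- right steps
  have htel : ∑ i ∈ Finset.Ico 3 (n-1), (Y i - Y (i+1)) = Y 3 - 1 := by
    rw [tele_sum Y (by omega : 3 ≤ n-1), hv]
  have hzero : ∑ i ∈ Finset.Ico 3 (n-1), ((Y i - Y (i+1))^2 - (Y i - Y (i+1))) = 0 := by
    rw [Finset.sum_sub_distrib, htel, ← hSRdef, hSReq]; ring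
  have hterm : ∀ i ∈ Finset.Ico 3 (n-1), (Y i - Y (i+1))^2 - (Y i - Y (i+1)) = 0 :=
    (Finset.sum_eq_zero_iff_of_nonneg (fun i _ => by
      linarith [int_self_le_sq (Y i - Y (i+1))])).mp hzero
  have hstep : ∀ i ∈ Finset.Ico 3 (n-1), Y (i+1) = Y i ∨ Y (i+1) = Y i - 1 := by
    intro i hi
    rcases mul_eq_zero.mp (show (Y i - Y (i+1)) * (Y i - Y (i+1) - 1) = 0 by
      linear_combination (hterm i hi)) with h | h <;> omega
  set D := (Finset.Ico 3 (n-1)).filter (fun i => Y (i+1) < Y i) with hDdef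
  have hind : ∀ i ∈ Finset.Ico 3 (n-1), Y i - Y (i+1) = (if i ∈ D then 1 else 0) := by
    intro i hi
    rcases hstep i hi with h | h
    · rw [if_neg (by rw [hDdef]; simp only [Finset.mem_filter]; omega)]; omega
    · rw [if_pos (by rw [hDdef]; simp only [Finset.mem_filter, Finset.mem_Ico] at hi ⊢; omega)]
      omega
  have hDsub : D ⊆ Finset.Ico 3 (n-1) := Finset.filter_subset _ _
  have hval : ∀ i, 3 ≤ i → i ≤ n-1 →
      Y i = 1 + ∑ j ∈ Finset.Ico i (n-1), (if j ∈ D then (1:ℤ) else 0) := by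
    intro i h3 hle
    have ht := tele_sum Y hle
    rw [Finset.sum_congr rfl (fun j hj => hind j (by
      simp only [Finset.mem_Ico] at hj ⊢; omega))] at ht
    rw [ht, hv]; ring
  have hcardD : (D.card : ℤ) = Y 3 - 1 := by
    have := hval 3 le_rfl (by omega)
    rw [Finset.sum_ite_mem, Finset.inter_eq_right.mpr hDsub, Finset.sum_const,
      nsmul_eq_mul, mul_one] at this
    omega
  -- case on Y 3
  have hy123 : Y 3 = 1 ∨ Y 3 = 2 ∨ Y 3 = 3 := by omega
  rcases hy123 with hy | hy | hy
  · -- all ones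
    have hD : D = ∅ := Finset.card_eq_zero.mp (by omega)
    refine ⟨1, 2, by omega, by omega, Or.inl rfl, build hn hsupp hA hu ?_ ?_⟩
    · rw [if_neg (by omega)]; omega
    · intro i h3 hle
      rw [hval i h3 hle, hD]
      simp only [Finset.notMem_empty, if_false, Finset.sum_const_zero]
      rw [if_neg (by omega), if_neg (by omega)]
      ring
  · -- one drop t
    obtain ⟨t, hD⟩ := Finset.card_eq_one.mp (show D.card = 1 by omega)
    have ht : 3 ≤ t ∧ t < n - 1 := by
      have : t ∈ Finset.Ico 3 (n-1) := hDsub (hD ▸ Finset.mem_singleton_self t)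
      simpa [Finset.mem_Ico] using this
    have hmid : ∀ i, 3 ≤ i → i ≤ n-1 → Y i = 1 + (if i ≤ t then 1 else 0) := by
      intro i h3 hle
      rw [hval i h3 hle, hD]
      simp only [Finset.mem_singleton]
      rw [Finset.sum_ite_eq' (Finset.Ico i (n-1)) t (fun _ => (1:ℤ))]
      simp only [Finset.mem_Ico]
      split_ifs <;> omega
    rcases h12 with h2 | h2
    · -- Y2 = 1, so Y3 = 2 came from second step: b = 1, c = t
      refine ⟨1, t, by omega, by omega, Or.inl rfl, build hn hsupp hA hu ?_ ?_⟩
      · rw [if_neg (by omega)]; omega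
      · intro i h3 hle
        rw [hmid i h3 hle, if_neg (show ¬(i ≤ 1) by omega)]
        ring
    · -- Y2 = 2 : b = t, c = 2
      refine ⟨t, 2, by omega, by omega, Or.inr ⟨ht.1, by omega, by omega⟩,
        build hn hsupp hA hu ?_ ?_⟩
      · rw [if_pos (by omega)]; omega
      · intro i h3 hle
        rw [hmid i h3 hle, if_neg (show ¬(i ≤ 2) by omega)]
        ring
  · -- two drops
    obtain ⟨t, s, hts, hD⟩ := Finset.card_eq_two.mp (show D.card = 2 by omega)
    have h2 : Y 2 = 2 := by omega
    have main : ∀ t s : ℕ, t < s → D = {t, s} →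
        ∃ b c, 2 ≤ c ∧ c ≤ n - 2 ∧ (b = 1 ∨ (3 ≤ b ∧ b ≤ n - 2 ∧ c < b)) ∧ Y = HR n b c := by
      intro t s hlt hD
      have ht : 3 ≤ t ∧ t < n - 1 := by
        have : t ∈ Finset.Ico 3 (n-1) := hDsub (hD ▸ by simp)
        simpa [Finset.mem_Ico] using this
      have hs : 3 ≤ s ∧ s < n - 1 := by
        have : s ∈ Finset.Ico 3 (n-1) := hDsub (hD ▸ by simp)
        simpa [Finset.mem_Ico] using this
      have hmid : ∀ i, 3 ≤ i → i ≤ n-1 →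
          Y i = 1 + (if i ≤ t then 1 else 0) + (if i ≤ s then 1 else 0) := by
        intro i h3 hle
        rw [hval i h3 hle, hD]
        have : ∀ j ∈ Finset.Ico i (n-1), (if j ∈ ({t, s} : Finset ℕ) then (1:ℤ) else 0)
            = (if j = t then 1 else 0) + (if j = s then 1 else 0) := by
          intro j _
          simp only [Finset.mem_insert, Finset.mem_singleton]
          split_ifs <;> omega
        rw [Finset.sum_congr rfl this, Finset.sum_add_distrib,
          Finset.sum_ite_eq' (Finset.Ico i (n-1)) t (fun _ => (1:ℤ)),
          Finset.sum_ite_eq' (Finset.Ico i (n-1)) s (fun _ => (1:ℤ))]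
        simp only [Finset.mem_Ico]
        split_ifs <;> omega
      refine ⟨s, t, by omega, by omega, Or.inr ⟨hs.1, by omega, hlt⟩,
        build hn hsupp hA hu ?_ ?_⟩
      · rw [if_pos (by omega)]; omega
      · intro i h3 hle
        rw [hmid i h3 hle]
        ring
    rcases lt_or_gt_of_ne hts with hlt | hgt
    · exact main t s hlt hD
    · exact main s t hgt (by rw [hD, Finset.pair_comm])

/-- In `Hₙ` (`n ≥ 6`) there are `(n-2)(n-3)/2` positive roots with
`a₀ ≠ 0`, `a₁ ≠ 0` and `a_{n-1} ≠ 0`, hence `(n-2)(n-3)` such roots counting both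
signs. -/
theorem stmt_14 (n : ℕ) (hn : 6 ≤ n) :
    {Y ∈ HRoots n | (∀ i, 0 ≤ Y i) ∧ Y 0 ≠ 0 ∧ Y 1 ≠ 0 ∧ Y (n - 1) ≠ 0}.ncard
      = (n - 2) * (n - 3) / 2 ∧
    {Y ∈ HRoots n | Y 0 ≠ 0 ∧ Y 1 ≠ 0 ∧ Y (n - 1) ≠ 0}.ncard
      = (n - 2) * (n - 3) := by
  have hpos_eq : {Y ∈ HRoots n | (∀ i, 0 ≤ Y i) ∧ Y 0 ≠ 0 ∧ Y 1 ≠ 0 ∧ Y (n - 1) ≠ 0}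
      = (fun p : ℕ × ℕ => HR n p.1 p.2) '' ↑(Par n) := by
    ext Y
    simp only [Set.mem_setOf_eq, Set.mem_image, Finset.mem_coe, HRoots]
    constructor
    · rintro ⟨⟨hsupp, hne, hsign, hq⟩, hpos, h0, h1, hl⟩
      obtain ⟨b, c, hc1, hc2, hb, hEq⟩ := classify hn hsupp hpos h0 h1 hl hq
      exact ⟨(b, c), (mem_Par hn).mpr ⟨hc1, hc2, hb⟩, hEq.symm⟩
    · rintro ⟨⟨b, c⟩, hp, rfl⟩
      obtain ⟨hc1, hc2, hb⟩ := (mem_Par hn).mp hp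
      have hb2 : b ≤ n - 2 := by rcases hb with rfl | h; omega; exact h.2.1
      have hz : HR n b c 0 ≠ 0 := by rw [HR_zero]; norm_num
      refine ⟨⟨fun i hi => HR_supp hn hi, ?_, Or.inl (fun i => HR_nonneg i),
        Or.inr (HQ_HR hn hc1 hc2 hb)⟩, fun i => HR_nonneg i, hz, ?_, ?_⟩
      · intro h
        exact hz (by rw [h]; rfl)
      · rw [HR_one hn]; norm_num
      · rw [HR_last hn hb2 hc2]; norm_num
  have hinj : Set.InjOn (fun p : ℕ × ℕ => HR n p.1 p.2) ↑(Par n) := by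
    rintro ⟨b, c⟩ hp ⟨b', c'⟩ hq h
    obtain ⟨hc1, hc2, hb⟩ := (mem_Par hn).mp hp
    obtain ⟨hc1', hc2', hb'⟩ := (mem_Par hn).mp hq
    obtain ⟨e1, e2⟩ := HR_inj hn hc1 hc2 hb hc1' hc2' hb' h
    exact Prod.ext e1 e2
  have hcard1 : {Y ∈ HRoots n | (∀ i, 0 ≤ Y i) ∧ Y 0 ≠ 0 ∧ Y 1 ≠ 0 ∧ Y (n - 1) ≠ 0}.ncard
      = (Par n).card := by
    rw [hpos_eq, Set.ncard_image_of_injOn hinj, Set.ncard_coe_finset]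
  have hfin : {Y ∈ HRoots n | (∀ i, 0 ≤ Y i) ∧ Y 0 ≠ 0 ∧ Y 1 ≠ 0 ∧ Y (n - 1) ≠ 0}.Finite := by
    rw [hpos_eq]
    exact ((Par n).finite_toSet).image _
  have hall : {Y ∈ HRoots n | Y 0 ≠ 0 ∧ Y 1 ≠ 0 ∧ Y (n - 1) ≠ 0}
      = {Y ∈ HRoots n | (∀ i, 0 ≤ Y i) ∧ Y 0 ≠ 0 ∧ Y 1 ≠ 0 ∧ Y (n - 1) ≠ 0}
        ∪ (fun Y : ℕ → ℤ => -Y) '' {Y ∈ HRoots n | (∀ i, 0 ≤ Y i) ∧ Y 0 ≠ 0 ∧ Y 1 ≠ 0 ∧ Y (n - 1) ≠ 0} := by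
    ext Y
    simp only [Set.mem_setOf_eq, Set.mem_union, Set.mem_image, HRoots]
    constructor
    · rintro ⟨⟨hsupp, hne, hsign, hq⟩, h0, h1, hl⟩
      rcases hsign with hposs | hnegs
      · exact Or.inl ⟨⟨hsupp, hne, Or.inl hposs, hq⟩, hposs, h0, h1, hl⟩
      · refine Or.inr ⟨-Y, ⟨⟨fun i hi => by simp [hsupp i hi],
          neg_ne_zero.mpr hne, Or.inl (fun i => by simpa using hnegs i),
          by rw [HQ_neg]; exact hq⟩, fun i => by simpa using hnegs i,
          by simpa using h0, by simpa using h1, by simpa using hl⟩, neg_neg Y⟩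
    · rintro (⟨hroot, hpos, h0, h1, hl⟩ | ⟨Z, ⟨⟨hsupp, hne, _, hq⟩, hposZ, h0, h1, hl⟩, rfl⟩)
      · exact ⟨hroot, h0, h1, hl⟩
      · refine ⟨⟨fun i hi => by simp [hsupp i hi], neg_ne_zero.mpr hne,
          Or.inr (fun i => by simpa using hposZ i), by rw [HQ_neg]; exact hq⟩,
          by simpa using h0, by simpa using h1, by simpa using hl⟩
  have hdisj : Disjoint {Y ∈ HRoots n | (∀ i, 0 ≤ Y i) ∧ Y 0 ≠ 0 ∧ Y 1 ≠ 0 ∧ Y (n - 1) ≠ 0}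
      ((fun Y : ℕ → ℤ => -Y) '' {Y ∈ HRoots n | (∀ i, 0 ≤ Y i) ∧ Y 0 ≠ 0 ∧ Y 1 ≠ 0 ∧ Y (n - 1) ≠ 0}) := by
    rw [Set.disjoint_left]
    rintro Y ⟨_, hpos, h0, _, _⟩ ⟨Z, ⟨_, hposZ, h0Z, _, _⟩, rfl⟩
    have h1 : 0 ≤ Z 0 := hposZ 0
    have h2 : 0 ≤ (-Z) 0 := hpos 0
    have h3 : (-Z) 0 ≠ 0 := h0
    simp only [Pi.neg_apply] at h2 h3
    exact h3 (le_antisymm (by linarith) h2)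
  have hcount : 2 * (Par n).card = (n-2)*(n-3) := card_Par hn
  constructor
  · rw [hcard1, ← hcount]
    exact (Nat.mul_div_cancel_left _ (by norm_num)).symm
  · rw [hall, Set.ncard_union_eq hdisj hfin (hfin.image _),
      Set.ncard_image_of_injective _ neg_injective, hcard1, ← hcount]
    ring
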